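/- Let K be a symmetric convex body in ℝⁿ (K = −K), let x ∈ int K, and y ∈ ℝⁿ \ {0}. Then the supremum sup{ |⟨y,w⟩| / √(1 − ⟨x,w⟩²) : w ∈ K* } is attained: there exists w ∈ K* with ⟨x,w⟩² < 1 and |⟨y,w⟩| / √(1 − ⟨x,w⟩²) = 1/b*_K(x,y). -/

import Mathlib

/-- A convex body in ℝⁿ: a compact convex set with nonempty interior. -/
def IsConvexBody {n : ℕ} (K : Set (EuclideanSpace ℝ (Fin n))) : Prop :=
  IsCompact K ∧ Convex ℝ K ∧ (interior K).Nonempty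

/-- The ellipse with parameters `(a, b)` through `x` in direction `y`,
`θ ↦ (cos θ)•a + b(sin θ)•y + (x - a)`, is inscribed in `K`. -/
def InscribedEllipse {n : ℕ} (K : Set (EuclideanSpace ℝ (Fin n)))
    (x y a : EuclideanSpace ℝ (Fin n)) (b : ℝ) : Prop :=
  ∀ θ : ℝ, (Real.cos θ) • a + (b * Real.sin θ) • y + (x - a) ∈ K

/-- `b*_K(x,y)`: the supremum of `b > 0` such that some ellipse with parameters
`(a,b)` through `x` in direction `y` is inscribed in `K`. -/
noncomputable def bStar {n : ℕ} (K : Set (EuclideanSpace ℝ (Fin n)))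
    (x y : EuclideanSpace ℝ (Fin n)) : ℝ :=
  sSup { b : ℝ | 0 < b ∧ ∃ a, InscribedEllipse K x y a b }

/-- The polar `K* = { w : ⟨z, w⟩ ≤ 1 for all z ∈ K }`. -/
def polarSet {n : ℕ} (K : Set (EuclideanSpace ℝ (Fin n))) : Set (EuclideanSpace ℝ (Fin n)) :=
  { w | ∀ z ∈ K, (inner ℝ z w : ℝ) ≤ 1 }

lemma exists_cos_sin (A B : ℝ) :
    ∃ θ : ℝ, A * Real.cos θ + B * Real.sin θ = Real.sqrt (A ^ 2 + B ^ 2) := by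
  rcases eq_or_ne (A ^ 2 + B ^ 2) 0 with h | h
  · exact ⟨0, by
      have hA : A = 0 := by nlinarith [sq_nonneg A, sq_nonneg B]
      have hB : B = 0 := by nlinarith [sq_nonneg A, sq_nonneg B]
      simp [hA, hB]⟩
  · set z : ℂ := ⟨A, B⟩ with hz
    have hz0 : z ≠ 0 := by
      intro h0
      apply h
      have hA : A = 0 := by simpa [hz] using congrArg (fun w => Complex.re w) h0
      have hB : B = 0 := by simpa [hz] using congrArg (fun w => Complex.im w) h0
      simp [hA, hB]
    have habs : ‖z‖ = Real.sqrt (A ^ 2 + B ^ 2) := by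
      rw [Complex.norm_def, Complex.normSq_mk]; ring_nf
    refine ⟨Complex.arg z, ?_⟩
    have hc := Complex.cos_arg hz0
    have hs := Complex.sin_arg z
    have hr : (0:ℝ) < Real.sqrt (A ^ 2 + B ^ 2) := by
      have : 0 < A ^ 2 + B ^ 2 := lt_of_le_of_ne (by positivity) (Ne.symm h)
      positivity
    rw [hc, hs, habs]
    field_simp
    rw [Real.sq_sqrt (by positivity)]; show A * A + B * B = A ^ 2 + B ^ 2; ring

set_option maxHeartbeats 1000000 in
/-- For a symmetric convex body, the supremum of |⟨y,w⟩|/√(1 − ⟨x,w⟩²) over w ∈ K* is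
attained and equals 1/b*_K(x,y). -/
theorem stmt_15 {n : ℕ} (hn : 1 ≤ n) (K : Set (EuclideanSpace ℝ (Fin n)))
    (hK : IsConvexBody K) (hsym : K = -K) (x y : EuclideanSpace ℝ (Fin n))
    (hx : x ∈ interior K) (hy : y ≠ 0) :
    ∃ w ∈ polarSet K, (inner ℝ x w : ℝ) ^ 2 < 1 ∧
      |(inner ℝ y w : ℝ)| / Real.sqrt (1 - (inner ℝ x w : ℝ) ^ 2) = 1 / bStar K x y := by
  classical
  obtain ⟨hKc, hKconv, hKint⟩ := hK
  have hKcl : IsClosed K := hKc.isClosed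
  have hxK : x ∈ K := interior_subset hx
  -- -x in interior
  have hnegx : -x ∈ interior K := by
    have hx' := hx
    have h2 : (-K : Set (EuclideanSpace ℝ (Fin n)))
        = (Homeomorph.neg (EuclideanSpace ℝ (Fin n))) ⁻¹' K := by
      ext z; simp [Set.mem_neg]
    rw [hsym, h2, ← Homeomorph.preimage_interior] at hx'
    simpa using hx'
  have h0int : (0 : EuclideanSpace ℝ (Fin n)) ∈ interior K := by
    have h2 := (hKconv.interior) hx hnegx (by norm_num : (0:ℝ) ≤ 1/2)
      (by norm_num : (0:ℝ) ≤ 1/2) (by norm_num)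
    have : ((1:ℝ)/2) • x + ((1:ℝ)/2) • (-x) = (0 : EuclideanSpace ℝ (Fin n)) := by
      rw [smul_neg]; abel
    rwa [this] at h2
  have hcball : ∀ p : EuclideanSpace ℝ (Fin n), p ∈ interior K → ∃ ε > 0, Metric.closedBall p ε ⊆ K := by
    intro p hp
    obtain ⟨r, hr, h⟩ := Metric.mem_nhds_iff.mp (mem_interior_iff_mem_nhds.mp hp)
    exact ⟨r/2, by positivity,
      (Metric.closedBall_subset_ball (by linarith)).trans h⟩
  obtain ⟨ε, hε, hball⟩ := hcball x hx
  obtain ⟨ε₀, hε₀, hball0⟩ := hcball 0 h0int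
  obtain ⟨R, hRK⟩ := hKc.isBounded.subset_closedBall (0 : EuclideanSpace ℝ (Fin n))
  have hRn : ∀ z ∈ K, ‖z‖ ≤ R := by
    intro z hz; simpa using hRK hz
  have hR0 : 0 ≤ R := le_trans (norm_nonneg _) (hRn x hxK)
  have hnegK : ∀ z ∈ K, -z ∈ K := by
    intro z hz
    rw [hsym]; exact Set.neg_mem_neg.mpr hz
  -- polar basics
  have hpol0 : (0 : EuclideanSpace ℝ (Fin n)) ∈ polarSet K := by
    intro z hz; simp
  have hpolneg : ∀ w ∈ polarSet K, -w ∈ polarSet K := by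
    intro w hw z hz
    have := hw (-z) (hnegK z hz)
    simpa [inner_neg_left, inner_neg_right] using this
  have hone : ∀ w ∈ polarSet K, (inner ℝ x w : ℝ) + ε * ‖w‖ ≤ 1 := by
    intro w hw
    rcases eq_or_ne w 0 with rfl | hw0
    · simp
    · have hwn : 0 < ‖w‖ := norm_pos_iff.mpr hw0
      have hzK : x + (ε / ‖w‖) • w ∈ K := by
        apply hball
        rw [Metric.mem_closedBall]
        rw [dist_eq_norm]
        have : x + (ε / ‖w‖) • w - x = (ε / ‖w‖) • w := by abel
        rw [this, norm_smul]
        rw [Real.norm_eq_abs, abs_of_pos (by positivity)]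
        rw [div_mul_cancel₀ _ hwn.ne']
      have h2 := hw _ hzK
      rw [inner_add_left, real_inner_smul_left, real_inner_self_eq_norm_sq] at h2
      have h3 : ε / ‖w‖ * ‖w‖ ^ 2 = ε * ‖w‖ := by field_simp
      linarith [h3 ▸ h2]
  have habs_xw : ∀ w ∈ polarSet K, |(inner ℝ x w : ℝ)| + ε * ‖w‖ ≤ 1 := by
    intro w hw
    have h1 := hone w hw
    have h2 := hone (-w) (hpolneg w hw)
    rw [inner_neg_right, norm_neg] at h2
    rcases abs_cases ((inner ℝ x w : ℝ)) with h | h <;> linarith [h.1]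
  have hsq : ∀ w ∈ polarSet K, (inner ℝ x w : ℝ)^2 < 1 := by
    intro w hw
    have h1 := habs_xw w hw
    have h2 : 0 ≤ ε * ‖w‖ := by positivity
    have h3 : |(inner ℝ x w : ℝ)| ≤ 1 := by linarith
    rcases eq_or_ne w 0 with rfl | hw0
    · simp
    · have h4 : 0 < ε * ‖w‖ := mul_pos hε (norm_pos_iff.mpr hw0)
      have : |(inner ℝ x w : ℝ)| < 1 := by linarith
      exact (sq_lt_one_iff_abs_lt_one _).mpr this
  have hwb : ∀ w ∈ polarSet K, ‖w‖ ≤ ε₀⁻¹ := by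
    intro w hw
    rcases eq_or_ne w 0 with rfl | hw0
    · simp; positivity
    · have hwn : 0 < ‖w‖ := norm_pos_iff.mpr hw0
      have hzK : (ε₀ / ‖w‖) • w ∈ K := by
        apply hball0
        rw [Metric.mem_closedBall, dist_zero_right, norm_smul, Real.norm_eq_abs,
          abs_of_pos (by positivity), div_mul_cancel₀ _ hwn.ne']
      have h2 := hw _ hzK
      rw [real_inner_smul_left, real_inner_self_eq_norm_sq] at h2
      have h3 : ε₀ / ‖w‖ * ‖w‖ ^ 2 = ε₀ * ‖w‖ := by field_simp
      rw [h3] at h2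
      rw [inv_eq_one_div, le_div_iff₀ hε₀]
      linarith
  have hpolcl : IsClosed (polarSet K) := by
    have hrw : polarSet K = ⋂ z ∈ K, {w : EuclideanSpace ℝ (Fin n) | (inner ℝ z w : ℝ) ≤ 1} := by
      ext w
      simp only [polarSet, Set.mem_setOf_eq, Set.mem_iInter]
    rw [hrw]
    exact isClosed_biInter fun z _ =>
      isClosed_le (continuous_const.inner continuous_id) continuous_const
  have hpolcompact : IsCompact (polarSet K) :=
    (isCompact_closedBall (0 : EuclideanSpace ℝ (Fin n)) ε₀⁻¹).of_isClosed_subset hpolcl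
      fun w hw => mem_closedBall_zero_iff.mpr (hwb w hw)
  have hbip : ∀ z : EuclideanSpace ℝ (Fin n), (∀ w ∈ polarSet K, (inner ℝ z w : ℝ) ≤ 1) → z ∈ K := by
    intro z hz
    by_contra hzK
    obtain ⟨f, u, hfK, hfz⟩ := geometric_hahn_banach_closed_point hKconv hKcl hzK
    have h0K : (0 : EuclideanSpace ℝ (Fin n)) ∈ K := interior_subset h0int
    have hu : 0 < u := by
      have := hfK 0 h0K
      simpa using this
    set v := (InnerProductSpace.toDual ℝ (EuclideanSpace ℝ (Fin n))).symm f with hv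
    have hvp : ∀ p : EuclideanSpace ℝ (Fin n), (inner ℝ v p : ℝ) = f p := fun p =>
      InnerProductSpace.toDual_symm_apply
    have hwmem : u⁻¹ • v ∈ polarSet K := by
      intro z' hz'
      rw [real_inner_smul_right, real_inner_comm, hvp]
      have h1 : f z' < u := hfK z' hz'
      have := mul_le_mul_of_nonneg_left h1.le (inv_nonneg.mpr hu.le)
      calc u⁻¹ * f z' ≤ u⁻¹ * u := this
        _ = 1 := inv_mul_cancel₀ hu.ne'
    have h2 := hz _ hwmem
    rw [real_inner_smul_right, real_inner_comm, hvp] at h2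
    have h3 : u < f z := hfz
    have h4 : 1 < u⁻¹ * f z := by
      rw [← inv_mul_cancel₀ hu.ne']
      exact mul_lt_mul_of_pos_left h3 (inv_pos.mpr hu)
    linarith
  have hinner : ∀ (a w : EuclideanSpace ℝ (Fin n)) (b θ : ℝ),
      (inner ℝ ((Real.cos θ) • a + (b * Real.sin θ) • y + (x - a)) w : ℝ) =
      Real.cos θ * (inner ℝ a w : ℝ) + b * Real.sin θ * (inner ℝ y w : ℝ)
        + ((inner ℝ x w : ℝ) - (inner ℝ a w : ℝ)) := by
    intro a w b θ
    rw [inner_add_left, inner_add_left, inner_sub_left, real_inner_smul_left,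
      real_inner_smul_left]
  -- direction 1
  have key1 : ∀ (a : EuclideanSpace ℝ (Fin n)) (b : ℝ), InscribedEllipse K x y a b → ∀ w ∈ polarSet K,
      b^2 * (inner ℝ y w : ℝ)^2 + (inner ℝ x w : ℝ)^2 ≤ 1 := by
    intro a b hins w hw
    set s : ℝ := (inner ℝ x w : ℝ) with hsdef
    set t : ℝ := (inner ℝ a w : ℝ) with htdef
    set Y : ℝ := (inner ℝ y w : ℝ) with hYdef
    have hs1 : |s| ≤ 1 := by
      have := habs_xw w hw
      have h2 : 0 ≤ ε * ‖w‖ := by positivity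
      linarith
    have hcon1 : ∀ θ : ℝ, Real.cos θ * t + b * Real.sin θ * Y + (s - t) ≤ 1 := by
      intro θ
      have h1 := hw _ (hins θ)
      rwa [hinner] at h1
    have hcon2 : ∀ θ : ℝ, -(Real.cos θ * t + b * Real.sin θ * Y + (s - t)) ≤ 1 := by
      intro θ
      have h1 := (hpolneg w hw) _ (hins θ)
      rw [inner_neg_right, hinner] at h1
      linarith [h1]
    obtain ⟨θ₁, hθ₁⟩ := exists_cos_sin t (b * Y)
    obtain ⟨θ₂, hθ₂⟩ := exists_cos_sin (-t) (-(b * Y))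
    rw [neg_sq, neg_sq] at hθ₂
    set r : ℝ := Real.sqrt (t ^ 2 + (b * Y) ^ 2) with hrdef
    have hr0 : 0 ≤ r := Real.sqrt_nonneg _
    have hrsq : r ^ 2 = t ^ 2 + (b * Y) ^ 2 := Real.sq_sqrt (by positivity)
    have h1 : r + (s - t) ≤ 1 := by
      have e : Real.cos θ₁ * t + b * Real.sin θ₁ * Y = r := by rw [← hθ₁]; ring
      linarith [hcon1 θ₁, e]
    have h2 : r - (s - t) ≤ 1 := by
      have e : Real.cos θ₂ * t + b * Real.sin θ₂ * Y = -r := by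
        have : -t * Real.cos θ₂ + -(b * Y) * Real.sin θ₂ = r := hθ₂
        linarith [this]
      linarith [hcon2 θ₂, e]
    have h3 : r ≤ 1 - |s - t| := by
      rcases abs_cases (s - t) with h | h <;> · rw [h.1]; linarith
    have hsu : s * (s - t) ≤ |s - t| := by
      calc s * (s - t) ≤ |s * (s - t)| := le_abs_self _
        _ = |s| * |s - t| := abs_mul _ _
        _ ≤ 1 * |s - t| := by
            exact mul_le_mul_of_nonneg_right hs1 (abs_nonneg _)
        _ = |s - t| := one_mul _
    have h4 : r ^ 2 ≤ (1 - |s - t|) ^ 2 := by nlinarith [abs_nonneg (s - t)]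
    nlinarith [sq_abs (s - t), h4, hrsq, hsu]
  have hyn : (0:ℝ) < ‖y‖ := norm_pos_iff.mpr hy
  set Bset := {b : ℝ | 0 < b ∧ ∃ a, InscribedEllipse K x y a b} with hBsetdef
  have hb₀ : ε / ‖y‖ ∈ Bset := by
    refine ⟨by positivity, x, ?_⟩
    intro θ
    apply hbip
    intro w hw
    rw [hinner]
    have hY : |(inner ℝ y w : ℝ)| ≤ ‖y‖ * ‖w‖ := abs_real_inner_le_norm y w
    have e1 : Real.cos θ * (inner ℝ x w : ℝ) ≤ |(inner ℝ x w : ℝ)| := by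
      calc Real.cos θ * (inner ℝ x w : ℝ) ≤ |Real.cos θ * (inner ℝ x w : ℝ)| := le_abs_self _
        _ = |Real.cos θ| * |(inner ℝ x w : ℝ)| := abs_mul _ _
        _ ≤ 1 * |(inner ℝ x w : ℝ)| :=
            mul_le_mul_of_nonneg_right (Real.abs_cos_le_one θ) (abs_nonneg _)
        _ = |(inner ℝ x w : ℝ)| := one_mul _
    have e2 : ε / ‖y‖ * Real.sin θ * (inner ℝ y w : ℝ) ≤ ε * ‖w‖ := by
      calc ε / ‖y‖ * Real.sin θ * (inner ℝ y w : ℝ)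
          ≤ |ε / ‖y‖ * Real.sin θ * (inner ℝ y w : ℝ)| := le_abs_self _
        _ = (ε / ‖y‖) * (|Real.sin θ| * |(inner ℝ y w : ℝ)|) := by
            rw [abs_mul, abs_mul, abs_of_pos (by positivity : (0:ℝ) < ε / ‖y‖)]; ring
        _ ≤ (ε / ‖y‖) * (1 * (‖y‖ * ‖w‖)) := by
            apply mul_le_mul_of_nonneg_left _ (by positivity)
            exact mul_le_mul (Real.abs_sin_le_one θ) hY (abs_nonneg _) zero_le_one
        _ = ε * ‖w‖ := by field_simp
    have e3 := habs_xw w hw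
    linarith
  have hBne : Bset.Nonempty := ⟨_, hb₀⟩
  have helem : ∀ (a : EuclideanSpace ℝ (Fin n)) (b : ℝ), 0 < b → InscribedEllipse K x y a b →
      ‖a‖ ≤ (‖x‖ + R)/2 ∧ b ≤ (‖x‖ + (‖x‖ + R)/2 + R)/‖y‖ := by
    intro a b hb hins
    have h1 : x - (2:ℝ) • a ∈ K := by
      have h := hins Real.pi
      have e : (Real.cos Real.pi) • a + (b * Real.sin Real.pi) • y + (x - a)
          = x - (2:ℝ) • a := by
        rw [Real.cos_pi, Real.sin_pi, mul_zero]
        module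
      rwa [e] at h
    have hna : ‖a‖ ≤ (‖x‖ + R)/2 := by
      have h2 := hRn _ h1
      have h3 : ‖(2:ℝ) • a‖ ≤ ‖x‖ + R := by
        have e : (2:ℝ) • a = x - (x - (2:ℝ) • a) := by abel
        rw [e]
        calc ‖x - (x - (2:ℝ) • a)‖ ≤ ‖x‖ + ‖x - (2:ℝ) • a‖ := norm_sub_le _ _
          _ ≤ ‖x‖ + R := by linarith
      rw [norm_smul, Real.norm_two] at h3
      linarith
    have h2 : b • y + (x - a) ∈ K := by
      have h := hins (Real.pi/2)
      have e : (Real.cos (Real.pi/2)) • a + (b * Real.sin (Real.pi/2)) • y + (x - a)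
          = b • y + (x - a) := by
        rw [Real.cos_pi_div_two, Real.sin_pi_div_two, mul_one, zero_smul, zero_add]
      rwa [e] at h
    have hby : b * ‖y‖ ≤ ‖x‖ + ‖a‖ + R := by
      have h3 := hRn _ h2
      have e : b • y = (b • y + (x - a)) - (x - a) := by abel
      calc b * ‖y‖ = ‖b • y‖ := by rw [norm_smul, Real.norm_eq_abs, abs_of_pos hb]
        _ = ‖(b • y + (x - a)) - (x - a)‖ := by rw [← e]
        _ ≤ ‖b • y + (x - a)‖ + ‖x - a‖ := norm_sub_le _ _
        _ ≤ R + (‖x‖ + ‖a‖) := by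
            have h4 := norm_sub_le x a
            linarith
        _ = ‖x‖ + ‖a‖ + R := by ring
    refine ⟨hna, ?_⟩
    rw [le_div_iff₀ hyn]
    calc b * ‖y‖ ≤ ‖x‖ + ‖a‖ + R := hby
      _ ≤ ‖x‖ + (‖x‖ + R)/2 + R := by linarith
  have hBdd : BddAbove Bset := by
    refine ⟨(‖x‖ + (‖x‖ + R)/2 + R)/‖y‖, ?_⟩
    rintro b ⟨hb, a, hins⟩
    exact (helem a b hb hins).2
  have hbpos : 0 < bStar K x y :=
    lt_of_lt_of_le (by positivity) (le_csSup hBdd hb₀)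
  have hattain : ∃ a : EuclideanSpace ℝ (Fin n), InscribedEllipse K x y a (bStar K x y) := by
    have hC1 : IsClosed {p : EuclideanSpace ℝ (Fin n) × ℝ | InscribedEllipse K x y p.1 p.2} := by
      have hrw : {p : EuclideanSpace ℝ (Fin n) × ℝ | InscribedEllipse K x y p.1 p.2}
          = ⋂ θ : ℝ, (fun p : EuclideanSpace ℝ (Fin n) × ℝ =>
              (Real.cos θ) • p.1 + (p.2 * Real.sin θ) • y + (x - p.1)) ⁻¹' K := by
        ext p
        simp [InscribedEllipse, Set.mem_iInter]
      rw [hrw]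
      refine isClosed_iInter fun θ => hKcl.preimage ?_
      fun_prop
    set CC : Set (EuclideanSpace ℝ (Fin n) × ℝ) :=
      {p : EuclideanSpace ℝ (Fin n) × ℝ | InscribedEllipse K x y p.1 p.2} ∩
        (Metric.closedBall 0 ((‖x‖ + R)/2) ×ˢ Set.Icc 0 ((‖x‖ + (‖x‖ + R)/2 + R)/‖y‖))
      with hCC
    have hCcomp : IsCompact CC :=
      ((isCompact_closedBall (0 : EuclideanSpace ℝ (Fin n)) ((‖x‖ + R)/2)).prod
        isCompact_Icc).of_isClosed_subset
        (hC1.inter (Metric.isClosed_closedBall.prod isClosed_Icc)) Set.inter_subset_right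
    have hI : IsCompact (Prod.snd '' CC) := hCcomp.image continuous_snd
    have hBsub : Bset ⊆ Prod.snd '' CC := by
      rintro b ⟨hb, a, hins⟩
      obtain ⟨h1, h2⟩ := helem a b hb hins
      exact ⟨(a, b), ⟨hins, mem_closedBall_zero_iff.mpr h1, hb.le, h2⟩, rfl⟩
    have hlub : IsLUB Bset (sSup Bset) := isLUB_csSup hBne hBdd
    have hmem : sSup Bset ∈ Prod.snd '' CC :=
      closure_minimal hBsub hI.isClosed (hlub.mem_closure hBne)
    obtain ⟨p, hp, hsnd⟩ := hmem
    have hbeq : bStar K x y = sSup Bset := rfl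
    refine ⟨p.1, ?_⟩
    rw [hbeq, ← hsnd]
    exact hp.1
  obtain ⟨astar, hastar⟩ := hattain
  have hle1 : ∀ w ∈ polarSet K,
      (bStar K x y)^2 * (inner ℝ y w : ℝ)^2 + (inner ℝ x w : ℝ)^2 ≤ 1 :=
    key1 astar _ hastar
  have hexists : ∃ w ∈ polarSet K,
      (bStar K x y)^2 * (inner ℝ y w : ℝ)^2 + (inner ℝ x w : ℝ)^2 = 1 := by
    by_contra hcon
    push_neg at hcon
    have hlt : ∀ w ∈ polarSet K,
        (bStar K x y)^2 * (inner ℝ y w : ℝ)^2 + (inner ℝ x w : ℝ)^2 < 1 :=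
      fun w hw => lt_of_le_of_ne (hle1 w hw) (hcon w hw)
    have hne : (polarSet K).Nonempty := ⟨0, hpol0⟩
    have hcY : Continuous fun w : EuclideanSpace ℝ (Fin n) => (inner ℝ y w : ℝ) :=
      continuous_const.inner continuous_id
    have hcX : Continuous fun w : EuclideanSpace ℝ (Fin n) => (inner ℝ x w : ℝ) :=
      continuous_const.inner continuous_id
    have hch : Continuous fun w : EuclideanSpace ℝ (Fin n) =>
        (bStar K x y)^2 * (inner ℝ y w : ℝ)^2 + (inner ℝ x w : ℝ)^2 :=
      (continuous_const.mul (hcY.pow 2)).add (hcX.pow 2)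
    obtain ⟨w₁, hw₁, hmax⟩ := hpolcompact.exists_isMaxOn hne hch.continuousOn
    set η : ℝ := 1 - ((bStar K x y)^2 * (inner ℝ y w₁ : ℝ)^2 + (inner ℝ x w₁ : ℝ)^2) with hη
    have hηpos : 0 < η := by
      have := hlt w₁ hw₁
      simp only [hη]
      linarith
    obtain ⟨w₂, hw₂, hmaxY⟩ := hpolcompact.exists_isMaxOn hne
      ((hcY.pow 2).continuousOn)
    set M : ℝ := (inner ℝ y w₂ : ℝ)^2 with hM
    have hMpos : 0 < M := by
      set c : ℝ := ((R + 1) * ‖y‖)⁻¹ with hc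
      have hcpos : 0 < c := by positivity
      have hw₀ : c • y ∈ polarSet K := by
        intro z hz
        rw [real_inner_smul_right]
        have h1 : (inner ℝ z y : ℝ) ≤ ‖z‖ * ‖y‖ := real_inner_le_norm z y
        have h2 : ‖z‖ ≤ R := hRn z hz
        have h3 : (inner ℝ z y : ℝ) ≤ (R + 1) * ‖y‖ := by nlinarith [norm_nonneg y]
        calc c * (inner ℝ z y : ℝ) ≤ c * ((R + 1) * ‖y‖) :=
              mul_le_mul_of_nonneg_left h3 hcpos.le
          _ = 1 := inv_mul_cancel₀ (by positivity)
      have h4 : (0:ℝ) < (inner ℝ y (c • y) : ℝ) := by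
        rw [real_inner_smul_right, real_inner_self_eq_norm_sq]
        positivity
      have h5 := hmaxY hw₀
      simp only [Set.mem_setOf_eq, Pi.pow_apply] at h5
      rw [hM]
      nlinarith [h4, h5]
    set b' : ℝ := Real.sqrt ((bStar K x y)^2 + η/M) with hb'
    have hb'sq : b'^2 = (bStar K x y)^2 + η/M := Real.sq_sqrt (by positivity)
    have hb'gt : bStar K x y < b' := by
      have h6 : (bStar K x y)^2 < b'^2 := by
        rw [hb'sq]
        have h7 : 0 < η / M := by positivity
        linarith
      exact lt_of_pow_lt_pow_left₀ 2 (Real.sqrt_nonneg _) h6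
    have hb'mem : b' ∈ Bset := by
      refine ⟨lt_trans hbpos hb'gt, x, ?_⟩
      intro θ
      apply hbip
      intro w hw
      rw [hinner]
      have hkey : b'^2 * (inner ℝ y w : ℝ)^2 + (inner ℝ x w : ℝ)^2 ≤ 1 := by
        have h1 : (bStar K x y)^2 * (inner ℝ y w : ℝ)^2 + (inner ℝ x w : ℝ)^2 ≤ 1 - η := by
          have h1' := hmax hw
          simp only [Set.mem_setOf_eq] at h1'
          rw [hη]
          linarith
        have h2 : (inner ℝ y w : ℝ)^2 ≤ M := hmaxY hw
        have h3 : 0 ≤ η / M := by positivity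
        calc b'^2 * (inner ℝ y w : ℝ)^2 + (inner ℝ x w : ℝ)^2
            = (bStar K x y)^2 * (inner ℝ y w : ℝ)^2 + (inner ℝ x w : ℝ)^2
              + (η/M) * (inner ℝ y w : ℝ)^2 := by rw [hb'sq]; ring
          _ ≤ (1 - η) + (η/M) * M := by
              have h4 : (η/M) * (inner ℝ y w : ℝ)^2 ≤ (η/M) * M :=
                mul_le_mul_of_nonneg_left h2 h3
              linarith
          _ = 1 := by field_simp; ring
      nlinarith [Real.sin_sq_add_cos_sq θ, hkey,
        sq_nonneg ((inner ℝ x w : ℝ) * Real.sin θ - b' * (inner ℝ y w : ℝ) * Real.cos θ),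
        sq_nonneg (Real.cos θ * (inner ℝ x w : ℝ) + b' * Real.sin θ * (inner ℝ y w : ℝ) - 1)]
    have hle := le_csSup hBdd hb'mem
    have hbeq : bStar K x y = sSup Bset := rfl
    rw [← hbeq] at hle
    linarith
  obtain ⟨w, hw, heq⟩ := hexists
  refine ⟨w, hw, hsq w hw, ?_⟩
  have h1s : 1 - (inner ℝ x w : ℝ)^2 = (bStar K x y)^2 * (inner ℝ y w : ℝ)^2 := by linarith
  have hYne : (inner ℝ y w : ℝ) ≠ 0 := by
    intro h0
    have h2 := hsq w hw
    rw [h0] at h1s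
    nlinarith
  have hYpos : 0 < |(inner ℝ y w : ℝ)| := abs_pos.mpr hYne
  have hsqrt : Real.sqrt (1 - (inner ℝ x w : ℝ)^2) = bStar K x y * |(inner ℝ y w : ℝ)| := by
    rw [h1s]
    have h2 : (bStar K x y)^2 * (inner ℝ y w : ℝ)^2 = (bStar K x y * |(inner ℝ y w : ℝ)|)^2 := by
      rw [mul_pow, sq_abs]
    rw [h2, Real.sqrt_sq (by positivity)]
  rw [hsqrt, mul_comm, div_mul_eq_div_div, div_self hYpos.ne']
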